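/- Let B be an n×m complex matrix with columns x_1,...,x_m and rows w_1,...,w_n, and let k ≥ 1. Then the columns attain the Welch bound for k with equality, i.e., binom(n+k-1,k) · Σ_{i,j} |⟨x_i,x_j⟩|^{2k} = (Σ_i ⟨x_i,x_i⟩^k)^2, if and only if the vectors √(multinomial(k; k_1,...,k_n)) · w_1^{(k_1)} ∘ ··· ∘ w_n^{(k_n)}, ranging over all tuples (k_1,...,k_n) of nonnegative integers with k_1+···+k_n = k, all have equal length and are pairwise orthogonal. -/

import Mathlib

open Finset

lemma welch_key {ι : Type*} [DecidableEq ι] (S : Finset ι) (g : ι → ι → ℝ) (d : ι → ℝ)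
    (hdiag : ∀ p ∈ S, g p p = (d p) ^ 2) (hg : ∀ p q, 0 ≤ g p q) :
    ((S.card : ℝ) * ∑ p ∈ S, ∑ q ∈ S, g p q = (∑ p ∈ S, d p) ^ 2 ↔
      (∀ p ∈ S, ∀ q ∈ S, d p = d q) ∧ (∀ p ∈ S, ∀ q ∈ S, p ≠ q → g p q = 0)) := by
  set N : ℝ := (S.card : ℝ) with hN
  have hid1 : ∑ p ∈ S, ∑ q ∈ S, (d p - d q) ^ 2
      = 2 * (N * ∑ p ∈ S, d p ^ 2) - 2 * (∑ p ∈ S, d p) ^ 2 := by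
    have : ∀ p ∈ S, ∑ q ∈ S, (d p - d q) ^ 2
        = N * d p ^ 2 - 2 * d p * (∑ q ∈ S, d q) + ∑ q ∈ S, d q ^ 2 := by
      intro p _
      rw [Finset.sum_congr rfl (fun q _ => by ring :
        ∀ q ∈ S, (d p - d q) ^ 2 = d p ^ 2 - 2 * d p * d q + d q ^ 2)]
      rw [Finset.sum_add_distrib, Finset.sum_sub_distrib, Finset.sum_const, ← Finset.mul_sum]
      simp [hN, mul_comm]
    rw [Finset.sum_congr rfl this, Finset.sum_add_distrib, Finset.sum_sub_distrib,
      Finset.sum_const, ← Finset.sum_mul, ← Finset.mul_sum]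
    simp only [nsmul_eq_mul, Finset.sum_const, ← hN, ← Finset.mul_sum]
    ring
  have hsplit : ∑ p ∈ S, ∑ q ∈ S, g p q
      = (∑ p ∈ S, d p ^ 2) + ∑ p ∈ S, ∑ q ∈ S.erase p, g p q := by
    rw [← Finset.sum_add_distrib]
    refine Finset.sum_congr rfl fun p hp => ?_
    rw [← hdiag p hp, Finset.add_sum_erase _ _ hp]
  have hR : 0 ≤ ∑ p ∈ S, ∑ q ∈ S.erase p, g p q :=
    Finset.sum_nonneg fun p _ => Finset.sum_nonneg fun q _ => hg p q
  have hD : 0 ≤ N * (∑ p ∈ S, d p ^ 2) - (∑ p ∈ S, d p) ^ 2 := by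
    nlinarith [Finset.sum_nonneg (fun p (_ : p ∈ S) => (sq_nonneg (d p - d p) : (0:ℝ) ≤ _)),
      Finset.sum_nonneg (fun p (_ : p ∈ S) => Finset.sum_nonneg fun q (_ : q ∈ S) => sq_nonneg (d p - d q)), hid1]
  constructor
  · intro h
    rw [hsplit] at h
    have hNR : 0 ≤ N * ∑ p ∈ S, ∑ q ∈ S.erase p, g p q :=
      mul_nonneg (Nat.cast_nonneg _) hR
    have hRz : N * (∑ p ∈ S, ∑ q ∈ S.erase p, g p q) = 0 ∧
        N * (∑ p ∈ S, d p ^ 2) - (∑ p ∈ S, d p) ^ 2 = 0 := by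
      constructor <;> nlinarith
    have hsumsq : ∑ p ∈ S, ∑ q ∈ S, (d p - d q) ^ 2 = 0 := by
      rw [hid1]; nlinarith [hRz.2]
    constructor
    · intro p hp q hq
      have := (Finset.sum_eq_zero_iff_of_nonneg
        (fun p _ => Finset.sum_nonneg fun q _ => sq_nonneg (d p - d q))).mp hsumsq p hp
      have := (Finset.sum_eq_zero_iff_of_nonneg fun q _ => sq_nonneg (d p - d q)).mp this q hq
      have := sq_eq_zero_iff.mp this
      linarith
    · intro p hp q hq hpq
      have hNne : N ≠ 0 := by
        simp only [hN, ne_eq, Nat.cast_eq_zero, Finset.card_eq_zero]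
        intro h'; rw [h'] at hp; exact absurd hp (Finset.notMem_empty p)
      have hRz' : ∑ p ∈ S, ∑ q ∈ S.erase p, g p q = 0 := by
        rcases mul_eq_zero.mp hRz.1 with h' | h'
        · exact absurd h' hNne
        · exact h'
      have := (Finset.sum_eq_zero_iff_of_nonneg
        (fun p _ => Finset.sum_nonneg fun q _ => hg p q)).mp hRz' p hp
      exact (Finset.sum_eq_zero_iff_of_nonneg fun q _ => hg p q).mp this q
        (Finset.mem_erase.mpr ⟨hpq.symm, hq⟩)
  · rintro ⟨h1, h2⟩
    have hRz : ∑ p ∈ S, ∑ q ∈ S.erase p, g p q = 0 :=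
      Finset.sum_eq_zero fun p hp => Finset.sum_eq_zero fun q hq =>
        h2 p hp q (Finset.mem_erase.mp hq).2 (fun h => (Finset.mem_erase.mp hq).1 h.symm)
    have hsq : ∑ p ∈ S, ∑ q ∈ S, (d p - d q) ^ 2 = 0 :=
      Finset.sum_eq_zero fun p hp => Finset.sum_eq_zero fun q hq => by
        rw [h1 p hp q hq]; ring
    rw [hsplit, hRz, add_zero]
    nlinarith [hid1, hsq]

lemma welch_swap3 {α β γ : Type*} (s : Finset α) (t : Finset β) (u : Finset γ)
    (f : α → β → γ → ℂ) :
    ∑ a ∈ s, ∑ b ∈ t, ∑ c ∈ u, f a b c = ∑ b ∈ t, ∑ c ∈ u, ∑ a ∈ s, f a b c := by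
  rw [Finset.sum_comm]
  exact Finset.sum_congr rfl fun b _ => Finset.sum_comm

lemma welch_swap4 {α β : Type*} (s : Finset α) (S : Finset β)
    (F : α → α → β → β → ℂ) :
    ∑ i ∈ s, ∑ j ∈ s, ∑ p ∈ S, ∑ q ∈ S, F i j p q
      = ∑ p ∈ S, ∑ q ∈ S, ∑ i ∈ s, ∑ j ∈ s, F i j p q := by
  rw [Finset.sum_congr rfl fun i (_ : i ∈ s) => welch_swap3 s S S (F i)]
  exact welch_swap3 s S S fun i p q => ∑ j ∈ s, F i j p q

lemma welch_expand (n m k : ℕ) (B : Matrix (Fin n) (Fin m) ℂ) (i j : Fin m) :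
    (∑ a, (starRingEnd ℂ) (B a i) * B a j) ^ k
      = ∑ p ∈ Finset.piAntidiag (Finset.univ : Finset (Fin n)) k,
          (starRingEnd ℂ) ((Real.sqrt (Nat.multinomial Finset.univ p) : ℂ) * ∏ a, B a i ^ p a)
            * ((Real.sqrt (Nat.multinomial Finset.univ p) : ℂ) * ∏ a, B a j ^ p a) := by
  rw [Finset.sum_pow_eq_sum_piAntidiag]
  refine Finset.sum_congr rfl fun p hp => ?_
  have hs : ((Real.sqrt (Nat.multinomial Finset.univ p) : ℝ) : ℂ)
      * ((Real.sqrt (Nat.multinomial Finset.univ p) : ℝ) : ℂ)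
      = ((Nat.multinomial Finset.univ p : ℕ) : ℂ) := by
    rw [← Complex.ofReal_mul, Real.mul_self_sqrt (Nat.cast_nonneg _)]
    norm_num
  simp only [map_mul, map_prod, map_pow, Complex.conj_ofReal, mul_pow,
    Finset.prod_mul_distrib]
  rw [mul_mul_mul_comm, hs]

lemma welch_card (n k : ℕ) :
    (Finset.piAntidiag (Finset.univ : Finset (Fin n)) k).card = (n + k - 1).choose k := by
  rw [← Finset.map_sym_eq_piAntidiag, Finset.card_map]
  have h : (Finset.univ : Finset (Fin n)).sym k = Finset.univ := by
    ext m; simp [Finset.mem_sym_iff]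
  rw [h, Finset.card_univ, Sym.card_sym_eq_choose, Fintype.card_fin]

theorem welch_equality_criterion (n m k : ℕ) (hk : 1 ≤ k)
    (B : Matrix (Fin n) (Fin m) ℂ) :
    -- columns and Schur-product row vectors
    (let x : Fin m → EuclideanSpace ℂ (Fin n) := fun j => WithLp.toLp 2 (fun i => B i j);
     let W : (Fin n → ℕ) → EuclideanSpace ℂ (Fin m) := fun kv =>
       WithLp.toLp 2 (fun j => (Real.sqrt (Nat.multinomial Finset.univ kv) : ℂ) *
         ∏ i, (B i j) ^ (kv i));
     (((n + k - 1).choose k : ℝ) *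
         ∑ i, ∑ j, ‖(inner ℂ (x i) (x j) : ℂ)‖ ^ (2 * k) =
       (∑ j, ‖x j‖ ^ (2 * k)) ^ 2) ↔
     ((∀ kv kv' : Fin n → ℕ, ∑ i, kv i = k → ∑ i, kv' i = k →
         ‖W kv‖ = ‖W kv'‖) ∧
      (∀ kv kv' : Fin n → ℕ, ∑ i, kv i = k → ∑ i, kv' i = k → kv ≠ kv' →
         (inner ℂ (W kv) (W kv') : ℂ) = 0))) := by
  intro x W
  classical
  set S : Finset (Fin n → ℕ) := Finset.piAntidiag (Finset.univ : Finset (Fin n)) k with hS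
  have hmem : ∀ kv : Fin n → ℕ, (∑ i, kv i = k) ↔ kv ∈ S := by
    intro kv; simp [hS, Finset.mem_piAntidiag]
  have hxdef : x = fun j => WithLp.toLp 2 (fun i => B i j) := rfl
  have hWdef : W = fun kv => WithLp.toLp 2 (fun j => (Real.sqrt (Nat.multinomial Finset.univ kv) : ℂ) *
      ∏ i, (B i j) ^ (kv i)) := rfl
  have hinner : ∀ i j : Fin m,
      (inner ℂ (x i) (x j) : ℂ) = ∑ a, (starRingEnd ℂ) (B a i) * B a j := by
    intro i j
    simp [hxdef, PiLp.inner_apply, RCLike.inner_apply, mul_comm]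
  have hz : ∀ i j : Fin m, (inner ℂ (x i) (x j) : ℂ) ^ k
      = ∑ p ∈ S, (starRingEnd ℂ) (W p i) * W p j := by
    intro i j
    rw [hinner, welch_expand n m k B i j, hS]
  have hG : ∀ p q : Fin n → ℕ,
      (inner ℂ (W p) (W q) : ℂ) = ∑ j, (starRingEnd ℂ) (W p j) * W q j := by
    intro p q; simp [PiLp.inner_apply, RCLike.inner_apply, mul_comm]
  have L4 : ∑ i, ∑ j, (starRingEnd ℂ) ((inner ℂ (x i) (x j) : ℂ) ^ k)
        * (inner ℂ (x i) (x j) : ℂ) ^ k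
      = ∑ p ∈ S, ∑ q ∈ S, (starRingEnd ℂ) (inner ℂ (W p) (W q) : ℂ)
        * (inner ℂ (W p) (W q) : ℂ) := by
    have step1 : ∑ i, ∑ j, (starRingEnd ℂ) ((inner ℂ (x i) (x j) : ℂ) ^ k)
          * (inner ℂ (x i) (x j) : ℂ) ^ k
        = ∑ i, ∑ j, ∑ p ∈ S, ∑ q ∈ S,
            (W p i * (starRingEnd ℂ) (W p j)) * ((starRingEnd ℂ) (W q i) * W q j) := by
      refine Finset.sum_congr rfl fun i _ => Finset.sum_congr rfl fun j _ => ?_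
      rw [hz i j, map_sum, Finset.sum_mul_sum]
      refine Finset.sum_congr rfl fun p _ => Finset.sum_congr rfl fun q _ => ?_
      simp only [map_mul, Complex.conj_conj]
    have step3 : ∑ p ∈ S, ∑ q ∈ S, (starRingEnd ℂ) (inner ℂ (W p) (W q) : ℂ)
          * (inner ℂ (W p) (W q) : ℂ)
        = ∑ p ∈ S, ∑ q ∈ S, ∑ i, ∑ j,
            (W p i * (starRingEnd ℂ) (W p j)) * ((starRingEnd ℂ) (W q i) * W q j) := by
      refine Finset.sum_congr rfl fun p _ => Finset.sum_congr rfl fun q _ => ?_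
      rw [hG p q, map_sum, Finset.sum_mul_sum]
      refine Finset.sum_congr rfl fun i _ => Finset.sum_congr rfl fun j _ => ?_
      simp only [map_mul, Complex.conj_conj]
      ring
    rw [step1, step3, welch_swap4]
  have hcast : ∀ z : ℂ, ((‖z‖ ^ (2 * k) : ℝ) : ℂ) = (starRingEnd ℂ) (z ^ k) * z ^ k := by
    intro z
    rw [mul_comm ((starRingEnd ℂ) (z ^ k)), Complex.mul_conj]
    rw [Complex.normSq_eq_norm_sq, norm_pow, ← pow_mul, mul_comm k 2]
  have hcast2 : ∀ z : ℂ, ((‖z‖ ^ 2 : ℝ) : ℂ) = (starRingEnd ℂ) z * z := by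
    intro z
    rw [mul_comm, Complex.mul_conj, Complex.normSq_eq_norm_sq]
  have HA : ∑ i, ∑ j, ‖(inner ℂ (x i) (x j) : ℂ)‖ ^ (2 * k)
      = ∑ p ∈ S, ∑ q ∈ S, ‖(inner ℂ (W p) (W q) : ℂ)‖ ^ 2 := by
    apply Complex.ofReal_injective
    calc ((∑ i, ∑ j, ‖(inner ℂ (x i) (x j) : ℂ)‖ ^ (2 * k) : ℝ) : ℂ)
        = ∑ i, ∑ j, (starRingEnd ℂ) ((inner ℂ (x i) (x j) : ℂ) ^ k)
            * (inner ℂ (x i) (x j) : ℂ) ^ k := by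
          rw [Complex.ofReal_sum]
          refine Finset.sum_congr rfl fun i _ => ?_
          rw [Complex.ofReal_sum]
          exact Finset.sum_congr rfl fun j _ => hcast _
      _ = ∑ p ∈ S, ∑ q ∈ S, (starRingEnd ℂ) (inner ℂ (W p) (W q) : ℂ)
            * (inner ℂ (W p) (W q) : ℂ) := L4
      _ = ((∑ p ∈ S, ∑ q ∈ S, ‖(inner ℂ (W p) (W q) : ℂ)‖ ^ 2 : ℝ) : ℂ) := by
          rw [Complex.ofReal_sum]
          refine (Finset.sum_congr rfl fun p _ => ?_).symm
          rw [Complex.ofReal_sum]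
          exact Finset.sum_congr rfl fun q _ => hcast2 _
  have HT : ∑ j, ‖x j‖ ^ (2 * k) = ∑ p ∈ S, ‖W p‖ ^ 2 := by
    apply Complex.ofReal_injective
    calc ((∑ j, ‖x j‖ ^ (2 * k) : ℝ) : ℂ)
        = ∑ j, ∑ p ∈ S, (starRingEnd ℂ) (W p j) * W p j := by
          rw [Complex.ofReal_sum]
          refine Finset.sum_congr rfl fun j _ => ?_
          rw [← hz j j, inner_self_eq_norm_sq_to_K, ← pow_mul]
          norm_cast
      _ = ∑ p ∈ S, ∑ j, (starRingEnd ℂ) (W p j) * W p j := Finset.sum_comm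
      _ = ((∑ p ∈ S, ‖W p‖ ^ 2 : ℝ) : ℂ) := by
          rw [Complex.ofReal_sum]
          refine Finset.sum_congr rfl fun p _ => ?_
          rw [← hG p p, inner_self_eq_norm_sq_to_K]
          norm_cast
  have hcard : ((n + k - 1).choose k : ℝ) = (S.card : ℝ) := by
    rw [hS, welch_card]
  rw [HA, HT, hcard]
  have key := welch_key S (fun p q => ‖(inner ℂ (W p) (W q) : ℂ)‖ ^ 2) (fun p => ‖W p‖ ^ 2)
    (fun p _ => by
      show ‖(inner ℂ (W p) (W p) : ℂ)‖ ^ 2 = (‖W p‖ ^ 2) ^ 2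
      rw [inner_self_eq_norm_sq_to_K, norm_pow, RCLike.norm_ofReal,
        abs_of_nonneg (norm_nonneg _)])
    (fun p q => by positivity)
  rw [key]
  constructor
  · rintro ⟨h1, h2⟩
    constructor
    · intro kv kv' hkv hkv'
      have h : ‖W kv‖ ^ 2 = ‖W kv'‖ ^ 2 := h1 kv ((hmem kv).mp hkv) kv' ((hmem kv').mp hkv')
      rw [← Real.sqrt_sq (norm_nonneg (W kv)), ← Real.sqrt_sq (norm_nonneg (W kv')), h]
    · intro kv kv' hkv hkv' hne
      have h : ‖(inner ℂ (W kv) (W kv') : ℂ)‖ ^ 2 = 0 :=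
        h2 kv ((hmem kv).mp hkv) kv' ((hmem kv').mp hkv') hne
      have : ‖(inner ℂ (W kv) (W kv') : ℂ)‖ = 0 := by
        have := pow_eq_zero_iff (n := 2) (by norm_num) |>.mp h
        exact this
      exact norm_eq_zero.mp this
  · rintro ⟨h1, h2⟩
    constructor
    · intro p hp q hq
      show ‖W p‖ ^ 2 = ‖W q‖ ^ 2
      rw [h1 p q ((hmem p).mpr hp) ((hmem q).mpr hq)]
    · intro p hp q hq hne
      show ‖(inner ℂ (W p) (W q) : ℂ)‖ ^ 2 = 0
      rw [h2 p q ((hmem p).mpr hp) ((hmem q).mpr hq) hne]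
      simp
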